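/- The sign-eliminating map f : A → B is injective: from any output (w̃_1,…,w̃_n) ∈ f(A) one can uniquely recover the input ((w_1,…,w_n), i). In particular, the output deficit letter b_1 is determined as the unique letter with #_{b_1}(w̃_1⋯w̃_n) = d_{b_1} − 1, and U is determined as the smallest length greater than L = |w̃_j| whose word ends with a letter in {1,…,j−1}, that last letter being the input deficit letter k. -/

import Mathlib

open Finset

noncomputable section

/-- One step of the sign-eliminating algorithm, processing the word with index
`idx t` (0-indexed step `t`, corresponding to paper step `t+1`).  The state is a
pair (current words, buffer).  `b t` is the `t`-th removed suffix letter of `w_j`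
(paper `b_{t+1}`). -/
def stepF (n : ℕ) (j k : Fin n) (b : ℕ → Fin n) (idx : ℕ → Fin n) (t : ℕ)
    (st : (Fin n → List (Fin n)) × List (Fin n)) :
    (Fin n → List (Fin n)) × List (Fin n) :=
  let l := idx t
  if j < l then (st.1, b t :: st.2)                        -- tail: word unchanged
  else if k < l then                                       -- exchange
    (Function.update st.1 l ((st.1 l).dropLast ++ [b t]), (st.1 l).getLastD (b t) :: st.2)
  else                                                     -- receiver
    (Function.update st.1 l (st.1 l ++ st.2), [b t])

/-- State after processing the `s` largest steps `m−1, m−2, …, m−s` (0-indexed),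
starting from buffer `[k]`. -/
def run (n : ℕ) (j k : Fin n) (b : ℕ → Fin n) (idx : ℕ → Fin n) (m : ℕ)
    (init : Fin n → List (Fin n)) : ℕ → (Fin n → List (Fin n)) × List (Fin n)
  | 0 => (init, [k])
  | s + 1 => stepF n j k b idx (m - 1 - s) (run n j k b idx m init s)

/-- The output of the sign-eliminating algorithm (Algorithm 1) on input
`((w_1,…,w_n), i)` with deficit letter `k`.  Here `L = |w_i|`, `U = |w_j|`,
`m = U − L`, `w_j` is truncated to its first `L` letters, `b` lists the removed
letters, and `idx t` is the unique index with `|w_{idx t}| = L + t`. -/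
def algOut (n : ℕ) (j k i : Fin n) (w : Fin n → List (Fin n)) : Fin n → List (Fin n) :=
  let L := (w i).length
  let U := (w j).length
  let m := U - L
  let b : ℕ → Fin n := fun t => ((w j).drop L).getD t k
  let idx : ℕ → Fin n := fun t =>
    @Function.invFun (Fin n) ℕ ⟨j⟩ (fun l => (w l).length) (L + t)
  (run n j k b idx m (Function.update w j ((w j).take L)) m).1

/-- Membership of `((w, i), k)` in `A` (with `k` the deficit letter):
`i ∈ [j−1]`, alphabet constraints, lengths a permutation of `{0,…,n−1}`,
`|w_i| < |w_j|`, and `k ∈ [i, j−1]` with `#_l(w_1⋯w_n) = d_l − 1[l=k]`. -/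
def memA (n : ℕ) (j : Fin n) (d : Fin n → ℕ) (w : Fin n → List (Fin n))
    (i k : Fin n) : Prop :=
  i < j ∧
  (∀ l : Fin n, ∀ a ∈ w l, l ≤ a) ∧
  (∃ σ : Equiv.Perm (Fin n), ∀ l, (w l).length = (σ l : ℕ)) ∧
  (w i).length < (w j).length ∧
  i ≤ k ∧ k < j ∧
  (∀ l : Fin n, (∑ m, (w m).count l) + (if l = k then 1 else 0) = d l)


namespace S15

/-- Bundled input data with the facts we need from `memA`. -/
structure In (n : ℕ) where
  j : Fin n
  i : Fin n
  k : Fin n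
  w : Fin n → List (Fin n)
  hij : i < j
  halpha : ∀ l : Fin n, ∀ x ∈ w l, l ≤ x
  σ : Equiv.Perm (Fin n)
  hσ : ∀ l, (w l).length = (σ l : ℕ)
  hLU : (w i).length < (w j).length
  hik : i ≤ k
  hkj : k < j

variable {n : ℕ} (a : In n)

namespace In

def L : ℕ := (a.w a.i).length
def U : ℕ := (a.w a.j).length
def m : ℕ := a.U - a.L
def bf (t : ℕ) : Fin n := ((a.w a.j).drop a.L).getD t a.k
def idxf (t : ℕ) : Fin n :=
  @Function.invFun (Fin n) ℕ ⟨a.j⟩ (fun l => (a.w l).length) (a.L + t)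
def recv (t : ℕ) : Prop := a.idxf t ≤ a.k

instance (t : ℕ) : Decidable (a.recv t) := by unfold recv; infer_instance

lemma len_inj : Function.Injective fun l => (a.w l).length := by
  intro x y hxy
  simp only [a.hσ] at hxy
  exact a.σ.injective (Fin.ext hxy)

lemma len_lt (l : Fin n) : (a.w l).length < n := by
  rw [a.hσ]; exact (a.σ l).isLt

lemma len_surj (v : ℕ) (hv : v < n) : ∃ l, (a.w l).length = v := by
  obtain ⟨l, hl⟩ := a.σ.surjective ⟨v, hv⟩
  exact ⟨l, by rw [a.hσ, hl]⟩

lemma L_lt_U : a.L < a.U := a.hLU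
lemma U_eq : a.U = a.L + a.m := by have := a.L_lt_U; unfold m; omega
lemma m_pos : 1 ≤ a.m := by have := a.L_lt_U; unfold m; omega
lemma U_lt : a.U < n := a.len_lt a.j

lemma len_idx {t : ℕ} (ht : t ≤ a.m) : (a.w (a.idxf t)).length = a.L + t := by
  have h1 : a.L + t < n := by have := a.U_lt; have := a.U_eq; omega
  obtain ⟨l, hl⟩ := a.len_surj (a.L + t) h1
  have h2 := @Function.invFun_eq (Fin n) ℕ ⟨a.j⟩ (fun l => (a.w l).length) _ ⟨l, hl⟩
  exact h2

lemma idx_unique {t : ℕ} (ht : t ≤ a.m) {l : Fin n}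
    (hl : (a.w l).length = a.L + t) : a.idxf t = l :=
  a.len_inj (show (a.w (a.idxf t)).length = (a.w l).length by rw [a.len_idx ht, hl])

lemma idx0 : a.idxf 0 = a.i := a.idx_unique (Nat.zero_le _) (by simp [L])

lemma idxm : a.idxf a.m = a.j := a.idx_unique le_rfl (by rw [← a.U_eq]; rfl)

lemma idx_ne_j {t : ℕ} (ht : t < a.m) : a.idxf t ≠ a.j := by
  intro hc
  have := a.len_idx ht.le
  rw [hc] at this
  have := a.U_eq
  unfold U at *
  omega

lemma recv0 : a.recv 0 := by unfold recv; rw [a.idx0]; exact a.hik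

lemma not_recv_of_tail {t : ℕ} (h : a.j < a.idxf t) : ¬ a.recv t := by
  unfold recv; intro hc; exact absurd (lt_of_le_of_lt hc a.hkj) (asymm h)

lemma not_recv_of_exch {t : ℕ} (h : a.k < a.idxf t) : ¬ a.recv t :=
  fun hc => absurd hc (not_le.2 h)

lemma drop_len : ((a.w a.j).drop a.L).length = a.m := by
  rw [List.length_drop]; rfl

lemma bf_get {t : ℕ} (ht : t < a.m) :
    ((a.w a.j).drop a.L)[t]? = some (a.bf t) := by
  have hlt : t < ((a.w a.j).drop a.L).length := by rw [a.drop_len]; exact ht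
  rw [List.getElem?_eq_getElem hlt]
  unfold bf
  rw [List.getD_eq_getElem _ _ hlt]

lemma bf_mem {t : ℕ} (ht : t < a.m) : a.bf t ∈ a.w a.j := by
  have := a.bf_get ht
  have h2 := List.mem_of_getElem? this
  exact List.mem_of_mem_drop h2

lemma j_le_bf {t : ℕ} (ht : t < a.m) : a.j ≤ a.bf t :=
  a.halpha a.j _ (a.bf_mem ht)

end In
end S15
namespace S15
namespace In

variable {n : ℕ} (a : In n)

lemma rstEx (t0 : ℕ) : ∃ r, t0 ≤ r ∧ (a.m ≤ r ∨ a.recv r) :=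
  ⟨max t0 a.m, le_max_left _ _, Or.inl (le_max_right _ _)⟩

/-- The least `r ≥ t0` which is a receiver step or `≥ m` (the next буфер reset at or above `t0`). -/
def rst (t0 : ℕ) : ℕ := Nat.find (a.rstEx t0)

lemma rst_ge (t0 : ℕ) : t0 ≤ a.rst t0 := (Nat.find_spec (a.rstEx t0)).1

lemma rst_le {t0 r : ℕ} (h1 : t0 ≤ r) (h2 : a.m ≤ r ∨ a.recv r) : a.rst t0 ≤ r :=
  Nat.find_min' (a.rstEx t0) ⟨h1, h2⟩

lemma rst_le_m {t0 : ℕ} (h : t0 ≤ a.m) : a.rst t0 ≤ a.m :=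
  a.rst_le h (Or.inl le_rfl)

lemma rst_spec (t0 : ℕ) : a.m ≤ a.rst t0 ∨ a.recv (a.rst t0) :=
  (Nat.find_spec (a.rstEx t0)).2

lemma rst_min {t0 r : ℕ} (h1 : t0 ≤ r) (h2 : r < a.rst t0) :
    r < a.m ∧ ¬ a.recv r := by
  have := Nat.find_min (a.rstEx t0) h2
  push_neg at this
  obtain ⟨h3, h4⟩ := this h1
  exact ⟨by omega, h4⟩

lemma rst_eq_self {t0 : ℕ} (h : a.m ≤ t0 ∨ a.recv t0) : a.rst t0 = t0 :=
  le_antisymm (a.rst_le le_rfl h) (a.rst_ge t0)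

lemma rst_succ_eq {t0 : ℕ} (h1 : t0 < a.m) (h2 : ¬ a.recv t0) :
    a.rst t0 = a.rst (t0 + 1) := by
  have hne : a.rst t0 ≠ t0 := by
    intro hc
    rcases a.rst_spec t0 with h | h
    · omega
    · rw [hc] at h; exact h2 h
  have hgt : t0 + 1 ≤ a.rst t0 := by have := a.rst_ge t0; omega
  refine le_antisymm ?_ ?_
  · exact a.rst_le (le_trans (Nat.le_succ t0) (a.rst_ge (t0+1))) (a.rst_spec (t0+1))
  · exact a.rst_le hgt (a.rst_spec t0)

/-- characterisation of `rst` -/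
lemma rst_eq {t0 r : ℕ} (h1 : t0 ≤ r) (h2 : a.m ≤ r ∨ a.recv r)
    (h3 : ∀ s, t0 ≤ s → s < r → s < a.m ∧ ¬ a.recv s) : a.rst t0 = r := by
  refine le_antisymm (a.rst_le h1 h2) ?_
  by_contra hc
  push_neg at hc
  obtain ⟨h4, h5⟩ := h3 _ (a.rst_ge t0) hc
  rcases a.rst_spec t0 with h | h
  · omega
  · exact h5 h

/-- last element of the current buffer -/
def βv (t0 : ℕ) : Fin n := if a.rst t0 = a.m then a.k else a.bf (a.rst t0)

/-- the letter pushed onto the buffer at a non-receiver step `s` -/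
def cf (s : ℕ) : Fin n :=
  if a.j < a.idxf s then a.bf s else (a.w (a.idxf s)).getLastD (a.bf s)

/-- closed form of the buffer just before step `t0 - 1` (i.e. when steps `≥ t0` are done) -/
def cbuf (t0 : ℕ) : List (Fin n) :=
  ((List.range' t0 (a.rst t0 - t0)).map a.cf) ++ [a.βv t0]

/-- closed form of the words when steps `≥ t0` are done -/
def cw (t0 : ℕ) (l : Fin n) : List (Fin n) :=
  if l = a.j then (a.w a.j).take a.L
  else if a.L + t0 ≤ (a.w l).length ∧ (a.w l).length < a.U then
    (if a.j < l then a.w l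
     else if a.k < l then (a.w l).dropLast ++ [a.bf ((a.w l).length - a.L)]
     else a.w l ++ a.cbuf ((a.w l).length - a.L + 1))
  else a.w l

lemma cbuf_len (t0 : ℕ) : (a.cbuf t0).length = a.rst t0 - t0 + 1 := by
  unfold cbuf; simp

lemma cbuf_m : a.cbuf a.m = [a.k] := by
  have h : a.rst a.m = a.m := a.rst_eq_self (Or.inl le_rfl)
  unfold cbuf βv
  rw [h]
  simp

lemma j_le_βv {t0 : ℕ} (h : t0 ≤ a.m) : a.βv t0 = a.k ∨ a.j ≤ a.βv t0 := by
  unfold βv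
  split
  · exact Or.inl rfl
  · right
    refine a.j_le_bf (lt_of_le_of_ne (a.rst_le_m h) ?_)
    assumption

lemma cw_m : a.cw a.m = Function.update a.w a.j ((a.w a.j).take a.L) := by
  funext l
  unfold cw
  rcases eq_or_ne l a.j with h | h
  · subst h; simp
  · rw [if_neg h, Function.update_of_ne h]
    rw [if_neg]
    rw [← a.U_eq]
    intro hc
    omega

end In
end S15
namespace S15
namespace In

variable {n : ℕ} (a : In n)

lemma cw_succ_idx {t0 : ℕ} (ht0 : t0 < a.m) :
    a.cw (t0 + 1) (a.idxf t0) = a.w (a.idxf t0) := by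
  unfold cw
  rw [if_neg (a.idx_ne_j ht0), if_neg]
  rw [a.len_idx ht0.le]
  intro hc
  omega

lemma cw_agree {t0 : ℕ} (ht0 : t0 < a.m) {l : Fin n} (hl : l ≠ a.idxf t0) :
    a.cw (t0 + 1) l = a.cw t0 l := by
  unfold cw
  by_cases hj : l = a.j
  · rw [if_pos hj, if_pos hj]
  · have hx : (a.w l).length ≠ a.L + t0 := fun hc => hl (a.idx_unique ht0.le hc).symm
    rw [if_neg hj, if_neg hj]
    exact if_congr (by constructor <;> intro h <;> [constructor; constructor] <;> omega) rfl rfl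

lemma cw_t0_eval {t0 : ℕ} (ht0 : t0 < a.m) :
    a.cw t0 (a.idxf t0) =
      if a.j < a.idxf t0 then a.w (a.idxf t0)
      else if a.k < a.idxf t0 then (a.w (a.idxf t0)).dropLast ++ [a.bf t0]
      else a.w (a.idxf t0) ++ a.cbuf (t0 + 1) := by
  unfold cw
  rw [if_neg (a.idx_ne_j ht0)]
  have hlen := a.len_idx ht0.le
  rw [if_pos (by rw [hlen]; exact ⟨by omega, by rw [a.U_eq]; omega⟩)]
  rw [hlen, Nat.add_sub_cancel_left]

lemma cbuf_cons {t0 : ℕ} (h1 : t0 < a.m) (h2 : ¬ a.recv t0) :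
    a.cbuf t0 = a.cf t0 :: a.cbuf (t0 + 1) := by
  have hr := a.rst_succ_eq h1 h2
  have hge : t0 + 1 ≤ a.rst (t0 + 1) := a.rst_ge (t0 + 1)
  unfold cbuf βv
  rw [hr]
  rw [show a.rst (t0+1) - t0 = (a.rst (t0+1) - (t0+1)) + 1 from by omega, List.range'_succ]
  simp

lemma cbuf_recv {t0 : ℕ} (h1 : t0 < a.m) (h2 : a.recv t0) :
    a.cbuf t0 = [a.bf t0] := by
  have hr : a.rst t0 = t0 := a.rst_eq_self (Or.inr h2)
  unfold cbuf βv
  rw [hr, if_neg (by omega : ¬ t0 = a.m)]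
  simp

lemma stepF_cw {t0 : ℕ} (ht0 : t0 < a.m) :
    stepF n a.j a.k a.bf a.idxf t0 (a.cw (t0 + 1), a.cbuf (t0 + 1))
      = (a.cw t0, a.cbuf t0) := by
  unfold stepF
  by_cases h1 : a.j < a.idxf t0
  · rw [if_pos h1]
    refine Prod.ext ?_ ?_
    · funext l
      dsimp only
      by_cases hl : l = a.idxf t0
      · subst hl
        rw [a.cw_succ_idx ht0, a.cw_t0_eval ht0, if_pos h1]
      · exact a.cw_agree ht0 hl
    · show a.bf t0 :: a.cbuf (t0+1) = a.cbuf t0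
      rw [a.cbuf_cons ht0 (a.not_recv_of_tail h1)]
      unfold cf
      rw [if_pos h1]
  · rw [if_neg h1]
    by_cases h2 : a.k < a.idxf t0
    · rw [if_pos h2]
      refine Prod.ext ?_ ?_
      · funext l
        dsimp only
        by_cases hl : l = a.idxf t0
        · subst hl
          rw [Function.update_self, a.cw_succ_idx ht0, a.cw_t0_eval ht0,
            if_neg h1, if_pos h2]
        · rw [Function.update_of_ne hl]
          exact a.cw_agree ht0 hl
      · show (a.cw (t0+1) (a.idxf t0)).getLastD (a.bf t0) :: a.cbuf (t0+1) = a.cbuf t0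
        rw [a.cw_succ_idx ht0, a.cbuf_cons ht0 (a.not_recv_of_exch h2)]
        unfold cf
        rw [if_neg h1]
    · rw [if_neg h2]
      have hrecv : a.recv t0 := not_lt.1 h2
      refine Prod.ext ?_ ?_
      · funext l
        dsimp only
        by_cases hl : l = a.idxf t0
        · subst hl
          rw [Function.update_self, a.cw_succ_idx ht0, a.cw_t0_eval ht0,
            if_neg h1, if_neg h2]
        · rw [Function.update_of_ne hl]
          exact a.cw_agree ht0 hl
      · show [a.bf t0] = a.cbuf t0
        rw [a.cbuf_recv ht0 hrecv]

lemma run_cw : ∀ s, s ≤ a.m →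
    run n a.j a.k a.bf a.idxf a.m (Function.update a.w a.j ((a.w a.j).take a.L)) s
      = (a.cw (a.m - s), a.cbuf (a.m - s)) := by
  intro s
  induction s with
  | zero =>
    intro _
    rw [Nat.sub_zero, a.cw_m, a.cbuf_m]
    rfl
  | succ s ih =>
    intro hs
    have hsm : s ≤ a.m := by omega
    show stepF n a.j a.k a.bf a.idxf (a.m - 1 - s) _ = _
    rw [ih hsm]
    have h1 : a.m - s = (a.m - 1 - s) + 1 := by omega
    have h2 : a.m - (s + 1) = a.m - 1 - s := by omega
    rw [h1, h2]
    exact a.stepF_cw (by omega)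

lemma algOut_eq : algOut n a.j a.k a.i a.w = a.cw 0 := by
  have h := a.run_cw a.m le_rfl
  rw [Nat.sub_self] at h
  show (run n a.j a.k _ _ a.m (Function.update a.w a.j ((a.w a.j).take a.L)) a.m).1 = a.cw 0
  exact congrArg Prod.fst h

end In
end S15
namespace S15
namespace In

variable {n : ℕ} (a : In n)

lemma cw0_j : a.cw 0 a.j = (a.w a.j).take a.L := by
  unfold cw; rw [if_pos rfl]

lemma cw0_j_len : (a.cw 0 a.j).length = a.L := by
  rw [a.cw0_j, List.length_take]
  exact min_eq_left a.L_lt_U.le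

lemma cw0_unproc {l : Fin n} (hl : l ≠ a.j)
    (h : (a.w l).length < a.L ∨ a.U ≤ (a.w l).length) : a.cw 0 l = a.w l := by
  unfold cw
  rw [if_neg hl, if_neg (by omega)]

lemma cw0_idx {t : ℕ} (ht : t < a.m) :
    a.cw 0 (a.idxf t) =
      if a.j < a.idxf t then a.w (a.idxf t)
      else if a.k < a.idxf t then (a.w (a.idxf t)).dropLast ++ [a.bf t]
      else a.w (a.idxf t) ++ a.cbuf (t + 1) := by
  unfold cw
  rw [if_neg (a.idx_ne_j ht)]
  have hlen := a.len_idx ht.le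
  have hU := a.U_eq
  rw [if_pos (by rw [hlen]; exact ⟨by omega, by omega⟩)]
  rw [hlen, Nat.add_sub_cancel_left]

lemma not_recv_pos {t : ℕ} (h : ¬ a.recv t) : 1 ≤ t := by
  rcases Nat.eq_zero_or_pos t with h0 | h0
  · exact absurd (h0 ▸ a.recv0) h
  · exact h0

lemma cw0_len_nonrecv {t : ℕ} (ht : t < a.m) (h : ¬ a.recv t) :
    (a.cw 0 (a.idxf t)).length = a.L + t := by
  have h1 := a.not_recv_pos h
  have hlen := a.len_idx ht.le
  rw [a.cw0_idx ht]
  by_cases hj : a.j < a.idxf t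
  · rw [if_pos hj]; exact hlen
  · have hk : a.k < a.idxf t := not_le.1 (by unfold recv at h; exact h)
    rw [if_neg hj, if_pos hk]
    rw [List.length_append, List.length_dropLast, hlen]
    simp
    omega

lemma cw0_len_recv {t : ℕ} (ht : t < a.m) (h : a.recv t) :
    (a.cw 0 (a.idxf t)).length = a.L + a.rst (t + 1) := by
  have hlen := a.len_idx ht.le
  have hge := a.rst_ge (t + 1)
  have hj : ¬ a.j < a.idxf t := fun hc => a.not_recv_of_tail hc h
  have hk : ¬ a.k < a.idxf t := fun hc => a.not_recv_of_exch hc h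
  rw [a.cw0_idx ht, if_neg hj, if_neg hk]
  rw [List.length_append, hlen, a.cbuf_len]
  omega

/-- classification of the letters of the output -/
lemma olen_spec (l : Fin n) :
    (l = a.j ∧ (a.cw 0 l).length = a.L)
    ∨ (l ≠ a.j ∧ ((a.w l).length < a.L ∨ a.U < (a.w l).length)
        ∧ a.cw 0 l = a.w l)
    ∨ (∃ t, 1 ≤ t ∧ t < a.m ∧ a.idxf t = l ∧ ¬ a.recv t
        ∧ (a.cw 0 l).length = a.L + t)
    ∨ (∃ t, t < a.m ∧ a.idxf t = l ∧ a.recv t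
        ∧ (a.cw 0 l).length = a.L + a.rst (t + 1)
        ∧ t < a.rst (t + 1) ∧ a.rst (t + 1) ≤ a.m) := by
  by_cases hj : l = a.j
  · exact Or.inl ⟨hj, by rw [hj]; exact a.cw0_j_len⟩
  by_cases hp : a.L ≤ (a.w l).length ∧ (a.w l).length < a.U
  · right; right
    have hU := a.U_eq
    have ht : (a.w l).length - a.L < a.m := by omega
    have hidx : a.idxf ((a.w l).length - a.L) = l :=
      a.idx_unique ht.le (by omega)
    by_cases hr : a.recv ((a.w l).length - a.L)
    · right
      have hgoal := a.cw0_len_recv ht hr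
      rw [hidx] at hgoal
      refine ⟨_, ht, hidx, hr, hgoal, ?_, ?_⟩
      · have h1 := a.rst_ge ((a.w l).length - a.L + 1); omega
      · exact a.rst_le_m (by omega)
    · left
      have hgoal := a.cw0_len_nonrecv ht hr
      rw [hidx] at hgoal
      exact ⟨_, a.not_recv_pos hr, ht, hidx, hr, hgoal⟩
  · right; left
    refine ⟨hj, ?_, a.cw0_unproc hj (by omega)⟩
    have : (a.w l).length ≠ a.U := fun hc => hj (a.len_inj hc)
    omega

lemma olen_inj {l l' : Fin n} (h : (a.cw 0 l).length = (a.cw 0 l').length) :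
    l = l' := by
  have hU := a.U_eq
  rcases a.olen_spec l with ⟨hj1, hL1⟩ | ⟨hne1, hb1, he1⟩ | ⟨t, ht1, ht2, hi1, hr1, hl1⟩
    | ⟨t, ht2, hi1, hr1, hl1, hg1, hm1⟩ <;>
    rcases a.olen_spec l' with ⟨hj2, hL2⟩ | ⟨hne2, hb2, he2⟩ | ⟨t', hs1, hs2, hi2, hr2, hl2⟩
      | ⟨t', hs2, hi2, hr2, hl2, hg2, hm2⟩
  · rw [hj1, hj2]
  · exfalso; rw [hL1, he2] at h; omega
  · exfalso; rw [hL1, hl2] at h; omega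
  · exfalso; rw [hL1, hl2] at h; omega
  · exfalso; rw [he1, hL2] at h; omega
  · rw [he1, he2] at h; exact a.len_inj h
  · exfalso; rw [he1, hl2] at h; omega
  · exfalso; rw [he1, hl2] at h; omega
  · exfalso; rw [hl1, hL2] at h; omega
  · exfalso; rw [hl1, he2] at h; omega
  · rw [hl1, hl2] at h
    have ht : t = t' := by omega
    rw [← hi1, ← hi2, ht]
  · exfalso
    rw [hl1, hl2] at h
    have heq : t = a.rst (t' + 1) := by omega
    rcases a.rst_spec (t' + 1) with hs | hs
    · omega
    · rw [← heq] at hs; exact hr1 hs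
  · exfalso; rw [hl1, hL2] at h; omega
  · exfalso; rw [hl1, he2] at h; omega
  · exfalso
    rw [hl1, hl2] at h
    have heq : t' = a.rst (t + 1) := by omega
    rcases a.rst_spec (t + 1) with hs | hs
    · omega
    · rw [← heq] at hs; exact hr2 hs
  · rw [hl1, hl2] at h
    rcases lt_trichotomy t t' with hlt | heqt | hlt
    · exfalso
      have : a.rst (t + 1) ≤ t' := a.rst_le (by omega) (Or.inr hr2)
      omega
    · rw [← hi1, ← hi2, heqt]
    · exfalso
      have : a.rst (t' + 1) ≤ t := a.rst_le (by omega) (Or.inr hr1)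
      omega

lemma exists_word_at {u : ℕ} (hu1 : 1 ≤ u) (hu2 : u ≤ a.m) :
    ∃ l, (a.cw 0 l).length = a.L + u := by
  by_cases h : u < a.m ∧ ¬ a.recv u
  · exact ⟨a.idxf u, a.cw0_len_nonrecv h.1 h.2⟩
  · have hor : a.m ≤ u ∨ a.recv u := by
      by_cases hu : u < a.m
      · right; by_contra hr; exact h ⟨hu, hr⟩
      · left; omega
    set t' := Nat.findGreatest a.recv (u - 1) with ht'def
    have hrecv' : a.recv t' := Nat.findGreatest_spec (Nat.zero_le _) a.recv0
    have hle' : t' ≤ u - 1 := Nat.findGreatest_le _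
    have hrst : a.rst (t' + 1) = u := by
      refine a.rst_eq (by omega) hor ?_
      intro s hs1 hs2
      refine ⟨by omega, ?_⟩
      exact Nat.findGreatest_is_greatest (n := u - 1) (k := s) (by omega) (by omega)
    refine ⟨a.idxf t', ?_⟩
    rw [a.cw0_len_recv (by omega) hrecv', hrst]

lemma cw0_last_recv {t : ℕ} (ht : t < a.m) (h : a.recv t) :
    (a.cw 0 (a.idxf t)).getLast? = some (a.βv (t + 1)) := by
  have hj : ¬ a.j < a.idxf t := fun hc => a.not_recv_of_tail hc h
  have hk : ¬ a.k < a.idxf t := fun hc => a.not_recv_of_exch hc h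
  rw [a.cw0_idx ht, if_neg hj, if_neg hk]
  unfold cbuf
  rw [← List.append_assoc]
  exact List.getLast?_concat

lemma word_at_last_mid {u : ℕ} {l : Fin n} (hu1 : 1 ≤ u) (hu2 : u < a.m)
    (hl : (a.cw 0 l).length = a.L + u) :
    ∃ x, (a.cw 0 l).getLast? = some x ∧ a.j ≤ x := by
  have hU := a.U_eq
  rcases a.olen_spec l with h1 | ⟨hne1, hb1, he1⟩ | ⟨t, ht1, ht2, hi1, hr1, hl1⟩
    | ⟨t, ht2, hi1, hr1, hl1, hg1, hm1⟩
  · rw [h1.2] at hl; omega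
  · rw [he1] at hl; omega
  · have htu : t = u := by rw [hl1] at hl; omega
    subst htu
    rw [← hi1]
    rw [← hi1] at hl
    by_cases hj : a.j < a.idxf t
    · rw [a.cw0_idx ht2, if_pos hj]
      have hne : a.w (a.idxf t) ≠ [] := by
        intro hc
        have := a.len_idx ht2.le
        rw [hc] at this
        simp at this
        omega
      refine ⟨(a.w (a.idxf t)).getLast hne, List.getLast?_eq_getLast hne, ?_⟩
      exact le_trans hj.le (a.halpha _ _ (List.getLast_mem hne))
    · have hk : a.k < a.idxf t := not_le.1 (by unfold recv at hr1; exact hr1)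
      rw [a.cw0_idx ht2, if_neg hj, if_pos hk]
      exact ⟨a.bf t, List.getLast?_concat, a.j_le_bf ht2⟩
  · have htu : a.rst (t + 1) = u := by rw [hl1] at hl; omega
    rw [← hi1]
    refine ⟨a.βv (t + 1), a.cw0_last_recv ht2 hr1, ?_⟩
    unfold βv
    rw [if_neg (by omega), htu]
    exact a.j_le_bf (by omega)

lemma word_at_last_top {l : Fin n} (hl : (a.cw 0 l).length = a.L + a.m) :
    (a.cw 0 l).getLast? = some a.k := by
  have hU := a.U_eq
  have hm := a.m_pos
  rcases a.olen_spec l with h1 | ⟨hne1, hb1, he1⟩ | ⟨t, ht1, ht2, hi1, hr1, hl1⟩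
    | ⟨t, ht2, hi1, hr1, hl1, hg1, hm1⟩
  · rw [h1.2] at hl; omega
  · rw [he1] at hl; omega
  · rw [hl1] at hl; omega
  · have htu : a.rst (t + 1) = a.m := by rw [hl1] at hl; omega
    rw [← hi1, a.cw0_last_recv ht2 hr1]
    unfold βv
    rw [if_pos htu]

lemma word_at_recv_iff {u : ℕ} {l : Fin n} (hu1 : 1 ≤ u) (hu2 : u < a.m)
    (hl : (a.cw 0 l).length = a.L + u) : (a.recv u ↔ l ≤ a.k) := by
  have hU := a.U_eq
  rcases a.olen_spec l with h1 | ⟨hne1, hb1, he1⟩ | ⟨t, ht1, ht2, hi1, hr1, hl1⟩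
    | ⟨t, ht2, hi1, hr1, hl1, hg1, hm1⟩
  · rw [h1.2] at hl; omega
  · rw [he1] at hl; omega
  · have htu : t = u := by rw [hl1] at hl; omega
    subst htu
    refine iff_of_false hr1 ?_
    rw [← hi1]
    exact hr1
  · have htu : a.rst (t + 1) = u := by rw [hl1] at hl; omega
    have hrecvu : a.recv u := by
      rcases a.rst_spec (t + 1) with hs | hs
      · omega
      · rwa [htu] at hs
    exact iff_of_true hrecvu (hi1 ▸ hr1)

end In
end S15
namespace S15

lemma count_eq_sum_getD {α : Type*} [DecidableEq α] (l : List α) (d : α) (x : α) :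
    l.count x = ∑ t ∈ Finset.range l.length, (if l.getD t d = x then 1 else 0) := by
  induction l with
  | nil => simp
  | cons a tl ih =>
    rw [List.length_cons, Finset.sum_range_succ']
    simp only [List.getD_cons_succ, List.getD_cons_zero, ← ih]
    by_cases h : a = x
    · subst h; rw [List.count_cons_self, if_pos rfl]
    · rw [List.count_cons_of_ne h, if_neg h, add_zero]

/-- total count of the letter `x` in a family of words -/
def Sc {n : ℕ} (W : Fin n → List (Fin n)) (x : Fin n) : ℕ := ∑ l, (W l).count x

lemma Sc_update {n : ℕ} (W : Fin n → List (Fin n)) (l0 : Fin n) (v : List (Fin n)) (x : Fin n) :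
    Sc (Function.update W l0 v) x + (W l0).count x = Sc W x + v.count x := by
  unfold Sc
  rw [← Finset.sum_erase_add _ _ (Finset.mem_univ l0),
    ← Finset.sum_erase_add _ (fun l => (W l).count x) (Finset.mem_univ l0)]
  have h1 : ∀ l ∈ Finset.univ.erase l0,
      (Function.update W l0 v l).count x = (W l).count x := by
    intro l hl
    rw [Function.update_of_ne (Finset.ne_of_mem_erase hl)]
  rw [Finset.sum_congr rfl h1, Function.update_self]
  ring

namespace In

variable {n : ℕ} (a : In n)

lemma cw0_recv_eq {t : ℕ} (ht : t < a.m) (h : a.recv t) :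
    a.cw 0 (a.idxf t) = a.w (a.idxf t) ++ a.cbuf (t + 1) := by
  have hj : ¬ a.j < a.idxf t := fun hc => a.not_recv_of_tail hc h
  have hk : ¬ a.k < a.idxf t := fun hc => a.not_recv_of_exch hc h
  rw [a.cw0_idx ht, if_neg hj, if_neg hk]

lemma w_recv_eq {t : ℕ} (ht : t < a.m) (h : a.recv t) :
    a.w (a.idxf t) = (a.cw 0 (a.idxf t)).take (a.L + t) := by
  rw [a.cw0_recv_eq ht h, List.take_left' (a.len_idx ht.le)]

lemma w_nonempty_of_pos {t : ℕ} (h1 : 1 ≤ t) (ht : t ≤ a.m) :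
    a.w (a.idxf t) ≠ [] := by
  intro hc
  have := a.len_idx ht
  rw [hc] at this
  simp at this
  omega

lemma cf_exch_eq {t : ℕ} (ht : t < a.m) (h1 : ¬ a.j < a.idxf t) :
    a.cf t = (a.w (a.idxf t)).getLastD (a.bf t) := by
  unfold cf
  rw [if_neg h1]

lemma w_exch_eq {t : ℕ} (ht : t < a.m) (h1 : ¬ a.j < a.idxf t)
    (h2 : a.k < a.idxf t) :
    a.w (a.idxf t) = (a.cw 0 (a.idxf t)).dropLast ++ [a.cf t] := by
  have hne : a.w (a.idxf t) ≠ [] :=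
    a.w_nonempty_of_pos (a.not_recv_pos (a.not_recv_of_exch h2)) ht.le
  have hcw : a.cw 0 (a.idxf t) = (a.w (a.idxf t)).dropLast ++ [a.bf t] := by
    rw [a.cw0_idx ht, if_neg h1, if_pos h2]
  rw [hcw, List.dropLast_concat, a.cf_exch_eq ht h1]
  rw [List.getLastD_eq_getLast?, List.getLast?_eq_getLast hne]
  exact (List.dropLast_append_getLast hne).symm

lemma w_tail_eq {t : ℕ} (ht : t < a.m) (h1 : a.j < a.idxf t) :
    a.w (a.idxf t) = a.cw 0 (a.idxf t) := by
  rw [a.cw0_idx ht, if_pos h1]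

/-- recovering pushed buffer letters from the receiver word below -/
lemma cf_from {t' s : ℕ} (ht' : a.recv t') (ht'm : t' < a.m)
    (hs1 : t' < s) (hs2 : s < a.rst (t' + 1)) :
    (a.cw 0 (a.idxf t'))[a.L + s - 1]? = some (a.cf s) := by
  have hlen := a.len_idx ht'm.le
  rw [a.cw0_recv_eq ht'm ht']
  rw [List.getElem?_append_right (by omega)]
  rw [hlen]
  unfold cbuf
  rw [List.getElem?_append_left (by simp; omega)]
  rw [List.getElem?_map]
  rw [List.getElem?_range' (by omega)]
  have h2 : t' + 1 + 1 * (a.L + s - 1 - (a.L + t')) = s := by omega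
  rw [h2]
  rfl

end In
end S15
namespace S15

lemma count_cons' {α : Type*} [DecidableEq α] (a x : α) (l : List α) :
    (a :: l).count x = l.count x + if a = x then 1 else 0 := by
  by_cases h : a = x
  · subst h; rw [List.count_cons_self, if_pos rfl]
  · rw [List.count_cons_of_ne h, if_neg h, add_zero]

lemma count_singleton'' {α : Type*} [DecidableEq α] (a x : α) :
    ([a] : List α).count x = if a = x then 1 else 0 := by
  rw [count_cons' a x [], List.count_nil, zero_add]

namespace In

variable {n : ℕ} (a : In n)

lemma count_run (x : Fin n) : ∀ s, s ≤ a.m →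
    Sc (run n a.j a.k a.bf a.idxf a.m (Function.update a.w a.j ((a.w a.j).take a.L)) s).1 x
      + ((run n a.j a.k a.bf a.idxf a.m (Function.update a.w a.j ((a.w a.j).take a.L)) s).2).count x
    = Sc (Function.update a.w a.j ((a.w a.j).take a.L)) x + (if a.k = x then 1 else 0)
      + ∑ t ∈ Finset.Ico (a.m - s) a.m, (if a.bf t = x then 1 else 0) := by
  intro s
  induction s with
  | zero =>
    intro _
    show Sc (Function.update a.w a.j ((a.w a.j).take a.L)) x + ([a.k]).count x = _
    rw [Nat.sub_zero, Finset.Ico_self, Finset.sum_empty, add_zero, count_singleton'']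
  | succ s ih =>
    intro hs
    have hsm : s ≤ a.m := by omega
    have ih' := ih hsm
    have hrun := a.run_cw s hsm
    have ht0 : a.m - s = (a.m - 1 - s) + 1 := by omega
    set t0 := a.m - 1 - s with ht0def
    have ht0m : t0 < a.m := by omega
    rw [hrun, ht0] at ih'
    dsimp only at ih'
    have hsum : ∑ t ∈ Finset.Ico (a.m - (s+1)) a.m, (if a.bf t = x then 1 else 0)
        = (if a.bf t0 = x then 1 else 0)
          + ∑ t ∈ Finset.Ico (t0 + 1) a.m, (if a.bf t = x then 1 else 0) := by
      rw [show a.m - (s+1) = t0 from by omega]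
      exact Finset.sum_eq_sum_Ico_succ_bot (by omega) _
    show Sc (stepF n a.j a.k a.bf a.idxf t0 _).1 x + ((stepF n a.j a.k a.bf a.idxf t0 _).2).count x = _
    rw [hrun, ht0]
    have hsucc := a.cw_succ_idx ht0m
    unfold stepF
    by_cases h1 : a.j < a.idxf t0
    · rw [if_pos h1]
      dsimp only
      rw [count_cons', hsum]
      omega
    · rw [if_neg h1]
      by_cases h2 : a.k < a.idxf t0
      · rw [if_pos h2]
        dsimp only
        rw [hsucc]
        have hne : a.w (a.idxf t0) ≠ [] :=
          a.w_nonempty_of_pos (a.not_recv_pos (a.not_recv_of_exch h2)) ht0m.le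
        have hup := Sc_update (a.cw (t0+1)) (a.idxf t0)
          ((a.w (a.idxf t0)).dropLast ++ [a.bf t0]) x
        rw [hsucc] at hup
        have hgl : (a.w (a.idxf t0)).dropLast ++ [(a.w (a.idxf t0)).getLastD (a.bf t0)]
            = a.w (a.idxf t0) := by
          rw [List.getLastD_eq_getLast?, List.getLast?_eq_getLast hne]
          exact List.dropLast_append_getLast hne
        have hsplit : (a.w (a.idxf t0)).count x
            = ((a.w (a.idxf t0)).dropLast).count x
              + (if (a.w (a.idxf t0)).getLastD (a.bf t0) = x then 1 else 0) := by
          conv_lhs => rw [← hgl]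
          rw [List.count_append, count_singleton'']
        have hcnt2 : ((a.w (a.idxf t0)).dropLast ++ [a.bf t0]).count x
            = ((a.w (a.idxf t0)).dropLast).count x + (if a.bf t0 = x then 1 else 0) := by
          rw [List.count_append, count_singleton'']
        rw [count_cons', hsum]
        omega
      · rw [if_neg h2]
        dsimp only
        rw [hsucc]
        have hup := Sc_update (a.cw (t0+1)) (a.idxf t0)
          (a.w (a.idxf t0) ++ a.cbuf (t0+1)) x
        rw [hsucc] at hup
        rw [List.count_append] at hup
        rw [count_singleton'', hsum]
        omega

lemma Sc_final (x : Fin n) :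
    Sc (a.cw 0) x + (if a.bf 0 = x then 1 else 0)
      = Sc a.w x + (if a.k = x then 1 else 0) := by
  have h := a.count_run x a.m le_rfl
  rw [a.run_cw a.m le_rfl, Nat.sub_self] at h
  dsimp only at h
  rw [a.cbuf_recv a.m_pos a.recv0, count_singleton'',
    ← Finset.range_eq_Ico] at h
  have hup := Sc_update a.w a.j ((a.w a.j).take a.L) x
  have hcnt : (a.w a.j).count x
      = ((a.w a.j).take a.L).count x + ((a.w a.j).drop a.L).count x := by
    conv_lhs => rw [← List.take_append_drop a.L (a.w a.j)]
    rw [List.count_append]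
  have hdrop : ((a.w a.j).drop a.L).count x
      = ∑ t ∈ Finset.range a.m, (if a.bf t = x then 1 else 0) := by
    rw [count_eq_sum_getD ((a.w a.j).drop a.L) a.k x, a.drop_len]
    rfl
  omega

end In
end S15
namespace S15
namespace In

variable {n : ℕ} (a a' : In n)

section Compare

variable (hj : a.j = a'.j) (ho : a.cw 0 = a'.cw 0)

include hj ho

lemma cmp_L : a.L = a'.L := by
  have h1 := a.cw0_j_len
  have h2 := a'.cw0_j_len
  rw [← hj, ← ho] at h2
  rw [← h1, ← h2]

lemma cmp_m_le : a.m ≤ a'.m := by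
  by_contra hc
  push_neg at hc
  obtain ⟨l, hl⟩ := a'.exists_word_at a'.m_pos le_rfl
  have htop := a'.word_at_last_top hl
  have hl2 : (a.cw 0 l).length = a.L + a'.m := by
    rw [ho, hl, cmp_L a a' hj ho]
  obtain ⟨x, hx1, hx2⟩ := a.word_at_last_mid a'.m_pos hc hl2
  rw [ho, htop] at hx1
  have : a'.k = x := by injection hx1
  subst this
  rw [hj] at hx2
  exact absurd a'.hkj (not_lt.2 hx2)

lemma cmp_m : a.m = a'.m :=
  le_antisymm (cmp_m_le a a' hj ho) (cmp_m_le a' a hj.symm ho.symm)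

lemma cmp_k : a.k = a'.k := by
  obtain ⟨l, hl⟩ := a.exists_word_at a.m_pos le_rfl
  have h1 := a.word_at_last_top hl
  have hl2 : (a'.cw 0 l).length = a'.L + a'.m := by
    rw [← ho, hl, cmp_L a a' hj ho, cmp_m a a' hj ho]
  have h2 := a'.word_at_last_top hl2
  rw [ho, h2] at h1
  injection h1.symm

lemma cmp_recv {u : ℕ} (hu : u < a.m) : a.recv u ↔ a'.recv u := by
  rcases Nat.eq_zero_or_pos u with h0 | h0
  · subst h0; exact iff_of_true a.recv0 a'.recv0
  obtain ⟨l, hl⟩ := a.exists_word_at h0 hu.le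
  have hiff1 := a.word_at_recv_iff h0 hu hl
  have hl2 : (a'.cw 0 l).length = a'.L + u := by
    rw [← ho, hl, cmp_L a a' hj ho]
  have hiff2 := a'.word_at_recv_iff h0 (by rw [← cmp_m a a' hj ho]; exact hu) hl2
  rw [hiff1, hiff2, cmp_k a a' hj ho]

lemma cmp_rst (t0 : ℕ) : a.rst t0 = a'.rst t0 := by
  have key : ∀ (b b' : In n), b.j = b'.j → b.cw 0 = b'.cw 0 →
      b'.rst t0 ≤ b.rst t0 := by
    intro b b' hjb hob
    refine b'.rst_le (b.rst_ge t0) ?_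
    rcases b.rst_spec t0 with hs | hs
    · left; rw [← cmp_m b b' hjb hob]; exact hs
    · by_cases hm : b.m ≤ b.rst t0
      · left; rw [← cmp_m b b' hjb hob]; exact hm
      · right; rw [← cmp_recv b b' hjb hob (by omega)]; exact hs
  exact le_antisymm (key a' a hj.symm ho.symm) (key a a' hj ho)

lemma cmp_idx {t : ℕ} (ht : t < a.m) : a.idxf t = a'.idxf t := by
  have ht' : t < a'.m := by rw [← cmp_m a a' hj ho]; exact ht
  by_cases hr : a.recv t
  · have hr' : a'.recv t := (cmp_recv a a' hj ho ht).1 hr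
    have h1 := a.cw0_len_recv ht hr
    have h2 := a'.cw0_len_recv ht' hr'
    refine a.olen_inj ?_
    rw [h1, ho, h2, cmp_L a a' hj ho, cmp_rst a a' hj ho]
  · have hr' : ¬ a'.recv t := fun hc => hr ((cmp_recv a a' hj ho ht).2 hc)
    have h1 := a.cw0_len_nonrecv ht hr
    have h2 := a'.cw0_len_nonrecv ht' hr'
    refine a.olen_inj ?_
    rw [h1, ho, h2, cmp_L a a' hj ho]

lemma cmp_cf {t : ℕ} (ht : t < a.m) (hnr : ¬ a.recv t) : a.cf t = a'.cf t := by
  have h1 : 1 ≤ t := a.not_recv_pos hnr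
  set t' := Nat.findGreatest a.recv (t - 1) with ht'def
  have hrecv' : a.recv t' := Nat.findGreatest_spec (Nat.zero_le _) a.recv0
  have hle' : t' ≤ t - 1 := Nat.findGreatest_le _
  have hgt : t < a.rst (t' + 1) := by
    by_contra hc
    push_neg at hc
    have hge := a.rst_ge (t' + 1)
    rcases a.rst_spec (t' + 1) with hs | hs
    · omega
    · rcases Nat.lt_or_ge (a.rst (t' + 1)) t with hlt | hge2
      · exact Nat.findGreatest_is_greatest (n := t - 1) (k := a.rst (t' + 1))
          (by omega) (by omega) hs
      · have : a.rst (t' + 1) = t := by omega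
        rw [this] at hs
        exact hnr hs
  have hcf1 := a.cf_from hrecv' (by omega) (by omega) hgt
  have hrecv'' : a'.recv t' := (cmp_recv a a' hj ho (by omega)).1 hrecv'
  have hgt' : t < a'.rst (t' + 1) := by rw [← cmp_rst a a' hj ho]; exact hgt
  have hcf2 := a'.cf_from hrecv'' (by rw [← cmp_m a a' hj ho]; omega) (by omega) hgt'
  rw [← cmp_idx a a' hj ho (by omega : t' < a.m), ← ho,
    ← cmp_L a a' hj ho] at hcf2
  rw [hcf2] at hcf1
  injection hcf1 with hv
  exact hv.symm

lemma cmp_bf_zero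
    (hSc : ∀ x, Sc a.w x + (if a.k = x then 1 else 0)
      = Sc a'.w x + (if a'.k = x then 1 else 0)) :
    a.bf 0 = a'.bf 0 := by
  have h1 := a.Sc_final (a.bf 0)
  have h2 := a'.Sc_final (a.bf 0)
  rw [← ho] at h2
  rw [hSc (a.bf 0)] at h1
  rw [← h2] at h1
  by_cases hc : a'.bf 0 = a.bf 0
  · exact hc.symm
  · rw [if_pos rfl, if_neg hc] at h1
    omega

lemma cmp_bf
    (hSc : ∀ x, Sc a.w x + (if a.k = x then 1 else 0)
      = Sc a'.w x + (if a'.k = x then 1 else 0))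
    {t : ℕ} (ht : t < a.m) : a.bf t = a'.bf t := by
  have ht' : t < a'.m := by rw [← cmp_m a a' hj ho]; exact ht
  rcases Nat.eq_zero_or_pos t with h0 | h0
  · subst h0; exact cmp_bf_zero a a' hj ho hSc
  by_cases hr : a.recv t
  · -- recovered as the last letter of the receiver word processed just below `t`
    set t' := Nat.findGreatest a.recv (t - 1) with ht'def
    have hrecv' : a.recv t' := Nat.findGreatest_spec (Nat.zero_le _) a.recv0
    have hle' : t' ≤ t - 1 := Nat.findGreatest_le _
    have hrst : a.rst (t' + 1) = t := by
      refine a.rst_eq (by omega) (Or.inr hr) ?_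
      intro s hs1 hs2
      exact ⟨by omega, Nat.findGreatest_is_greatest (n := t - 1) (k := s)
        (by omega) (by omega)⟩
    have hlast1 := a.cw0_last_recv (by omega : t' < a.m) hrecv'
    have hβ1 : a.βv (t' + 1) = a.bf t := by
      unfold βv
      rw [hrst, if_neg (by omega)]
    have hrecv'' : a'.recv t' := (cmp_recv a a' hj ho (by omega)).1 hrecv'
    have hrst' : a'.rst (t' + 1) = t := by rw [← cmp_rst a a' hj ho]; exact hrst
    have hlast2 := a'.cw0_last_recv (by omega : t' < a'.m) hrecv''
    have hβ2 : a'.βv (t' + 1) = a'.bf t := by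
      unfold βv
      rw [hrst', if_neg (by omega)]
    rw [← cmp_idx a a' hj ho (by omega : t' < a.m), ← ho] at hlast2
    rw [hlast2, hβ1, hβ2] at hlast1
    injection hlast1 with hv
    exact hv.symm
  · by_cases htail : a.j < a.idxf t
    · -- tail step: recovered via `cf`
      have hcf := cmp_cf a a' hj ho ht hr
      unfold cf at hcf
      rw [if_pos htail] at hcf
      rw [if_pos (by rw [← cmp_idx a a' hj ho ht, ← hj]; exact htail)] at hcf
      exact hcf
    · -- exchange step: last letter of the output word
      have hk2 : a.k < a.idxf t := not_le.1 hr
      have hcw1 : a.cw 0 (a.idxf t) = (a.w (a.idxf t)).dropLast ++ [a.bf t] := by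
        rw [a.cw0_idx ht, if_neg htail, if_pos hk2]
      have hcw2 : a'.cw 0 (a'.idxf t)
          = (a'.w (a'.idxf t)).dropLast ++ [a'.bf t] := by
        rw [a'.cw0_idx ht', if_neg (by rw [← cmp_idx a a' hj ho ht, ← hj]; exact htail),
          if_pos (by rw [← cmp_idx a a' hj ho ht, ← cmp_k a a' hj ho]; exact hk2)]
      have h1 : (a.cw 0 (a.idxf t)).getLast? = some (a.bf t) := by
        rw [hcw1]; exact List.getLast?_concat
      have h2 : (a.cw 0 (a.idxf t)).getLast? = some (a'.bf t) := by
        rw [cmp_idx a a' hj ho ht, ho, hcw2]; exact List.getLast?_concat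
      rw [h2] at h1
      injection h1.symm

end Compare

end In
end S15
namespace S15
namespace In

variable {n : ℕ} (a a' : In n)

lemma bf_getElem {t : ℕ} (ht : t < a.m) :
    ((a.w a.j).drop a.L)[t]? = some (a.bf t) := by
  have hlt : t < ((a.w a.j).drop a.L).length := by rw [a.drop_len]; exact ht
  rw [List.getElem?_eq_getElem hlt]
  exact congrArg some (List.getD_eq_getElem _ a.k hlt).symm

section Compare2

variable (hj : a.j = a'.j) (ho : a.cw 0 = a'.cw 0)
  (hSc : ∀ x, Sc a.w x + (if a.k = x then 1 else 0)
      = Sc a'.w x + (if a'.k = x then 1 else 0))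

include hj ho

lemma cmp_i : a.i = a'.i := by
  rw [← a.idx0, ← a'.idx0]
  exact cmp_idx a a' hj ho a.m_pos

include hSc in
lemma cmp_w : a.w = a'.w := by
  funext l
  by_cases hlj : l = a.j
  · subst hlj
    have htake : (a.w a.j).take a.L = (a'.w a'.j).take a'.L := by
      rw [← a.cw0_j, ← a'.cw0_j, ho, hj]
    have hdrop : (a.w a.j).drop a.L = (a'.w a'.j).drop a'.L := by
      apply List.ext_getElem?
      intro t
      by_cases htm : t < a.m
      · rw [a.bf_getElem htm, a'.bf_getElem (by rw [← cmp_m a a' hj ho]; exact htm)]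
        exact congrArg some (cmp_bf a a' hj ho hSc htm)
      · rw [List.getElem?_eq_none (by rw [a.drop_len]; omega),
          List.getElem?_eq_none (by rw [a'.drop_len, ← cmp_m a a' hj ho]; omega)]
    calc a.w a.j = (a.w a.j).take a.L ++ (a.w a.j).drop a.L :=
          (List.take_append_drop _ _).symm
      _ = (a'.w a'.j).take a'.L ++ (a'.w a'.j).drop a'.L := by rw [htake, hdrop]
      _ = a'.w a'.j := List.take_append_drop _ _
      _ = a'.w a.j := by rw [hj]
  · by_cases hp : a.L ≤ (a.w l).length ∧ (a.w l).length < a.U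
    · have hU := a.U_eq
      have ht : (a.w l).length - a.L < a.m := by omega
      have hidxl : a.idxf ((a.w l).length - a.L) = l :=
        a.idx_unique ht.le (by omega)
      set t := (a.w l).length - a.L with htdef
      have ht' : t < a'.m := by rw [← cmp_m a a' hj ho]; exact ht
      have hidxl' : a'.idxf t = l := by rw [← cmp_idx a a' hj ho ht]; exact hidxl
      by_cases hrec : a.recv t
      · have hrec' : a'.recv t := (cmp_recv a a' hj ho ht).1 hrec
        have e1 := a.w_recv_eq ht hrec
        rw [hidxl] at e1
        have e2 := a'.w_recv_eq ht' hrec'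
        rw [hidxl'] at e2
        rw [e1, e2, ho, cmp_L a a' hj ho]
      · have hrec' : ¬ a'.recv t := fun hc => hrec ((cmp_recv a a' hj ho ht).2 hc)
        by_cases htail : a.j < a.idxf t
        · have e1 := a.w_tail_eq ht htail
          rw [hidxl] at e1
          have e2 := a'.w_tail_eq ht' (by rw [hidxl', ← hj, ← hidxl]; exact htail)
          rw [hidxl'] at e2
          rw [e1, e2, ho]
        · have hk2 : a.k < a.idxf t := not_le.1 hrec
          have e1 := a.w_exch_eq ht htail hk2
          rw [hidxl] at e1
          have e2 := a'.w_exch_eq ht'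
            (by rw [hidxl', ← hj, ← hidxl]; exact htail)
            (by rw [hidxl', ← cmp_k a a' hj ho, ← hidxl]; exact hk2)
          rw [hidxl'] at e2
          rw [e1, e2, ho, cmp_cf a a' hj ho ht hrec]
    · have hb : (a.w l).length < a.L ∨ a.U ≤ (a.w l).length := by omega
      have e1 := a.cw0_unproc hlj hb
      have hlj' : l ≠ a'.j := by rw [← hj]; exact hlj
      have hb' : (a'.w l).length < a'.L ∨ a'.U ≤ (a'.w l).length := by
        by_contra hc
        have hple : a'.L ≤ (a'.w l).length ∧ (a'.w l).length < a'.U := by omega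
        have hU' := a'.U_eq
        have ht2 : (a'.w l).length - a'.L < a'.m := by omega
        have hidx2 : a'.idxf ((a'.w l).length - a'.L) = l :=
          a'.idx_unique ht2.le (by omega)
        have ht2a : (a'.w l).length - a'.L < a.m := by
          rw [cmp_m a a' hj ho]; exact ht2
        have hidx1 : a.idxf ((a'.w l).length - a'.L) = l := by
          rw [cmp_idx a a' hj ho ht2a]; exact hidx2
        have hlen := a.len_idx ht2a.le
        rw [hidx1] at hlen
        have hL := cmp_L a a' hj ho
        have hU := a.U_eq
        omega
      have e2 := a'.cw0_unproc hlj' hb'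
      rw [← e1, ← e2, ho]

end Compare2

end In
end S15

/-- injectivity of the sign-eliminating map: two inputs from `A`
(with their respective deficit letters) producing the same output must coincide;
in particular the input `(w, i)` (and its deficit letter `k`) is uniquely
recoverable from the output. -/
theorem stmt15 (n : ℕ) (hn : 2 ≤ n) (j : Fin n) (hj : 1 ≤ (j : ℕ))
    (d : Fin n → ℕ) (hd : ∑ l, d l = n.choose 2 + 1)
    (w w' : Fin n → List (Fin n)) (i k i' k' : Fin n)
    (h : memA n j d w i k) (h' : memA n j d w' i' k')
    (heq : algOut n j k i w = algOut n j k' i' w') :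
    w = w' ∧ i = i' ∧ k = k' := by
  obtain ⟨hij, halpha, ⟨σ, hσ⟩, hLU, hik, hkj, hcount⟩ := h
  obtain ⟨hij', halpha', ⟨σ', hσ'⟩, hLU', hik', hkj', hcount'⟩ := h'
  set a : S15.In n := ⟨j, i, k, w, hij, halpha, σ, hσ, hLU, hik, hkj⟩ with hadef
  set a' : S15.In n := ⟨j, i', k', w', hij', halpha', σ', hσ', hLU', hik', hkj'⟩ with ha'def
  have hjj : a.j = a'.j := rfl
  have ho : a.cw 0 = a'.cw 0 := by
    have e1 := a.algOut_eq
    have e2 := a'.algOut_eq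
    rw [← e1, ← e2]
    exact heq
  have flip : ∀ (y z : Fin n), (if y = z then 1 else 0) = (if z = y then 1 else 0) := by
    intro y z
    by_cases hyz : y = z
    · simp [hyz]
    · rw [if_neg hyz, if_neg (Ne.symm hyz)]
  have hSc : ∀ x, S15.Sc a.w x + (if a.k = x then 1 else 0)
      = S15.Sc a'.w x + (if a'.k = x then 1 else 0) := by
    intro x
    have f1 := hcount x
    have f2 := hcount' x
    have fl1 := flip x k
    have fl2 := flip x k'
    have g1 : S15.Sc a.w x = ∑ mm, (w mm).count x := rfl
    have g2 : S15.Sc a'.w x = ∑ mm, (w' mm).count x := rfl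
    have g3 : (if a.k = x then 1 else 0) = (if k = x then 1 else 0) := rfl
    have g4 : (if a'.k = x then 1 else 0) = (if k' = x then 1 else 0) := rfl
    omega
  exact ⟨S15.In.cmp_w a a' hjj ho hSc, S15.In.cmp_i a a' hjj ho,
    S15.In.cmp_k a a' hjj ho⟩

end
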